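/- Let a and b be points on the x-axis, let p be a point of the plane, and define a' = 2a − p and b' = 2b − p (so that a and b are the midpoints of the segments [p,a'] and [p,b'], respectively). Then for every point q on the closed segment [a',b'] with q ≠ p' (where p' = (p₁,−p₂) is the mirror image of p across the x-axis), the midpoint m of p and q lies on the segment [a,b], satisfies dist(m,p) = dist(m,q) (so that [q,p] is a diameter of the circle C_p(m)), and m is the unique point on the x-axis equidistant from p and q. -/

import Mathlib

/-- Lemma 2(ii): for `a`, `b` on the x-axis, `a' = 2a − p`, `b' = 2b − p`, and
any `q ∈ [a', b']` with `q ≠ p'` (the mirror image of `p`), the midpoint `m`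
of `p` and `q` lies on `[a, b]`, is equidistant from `p` and `q` (so `[q, p]`
is a diameter of `C_p(m)`), and is the unique point of the x-axis equidistant
from `p` and `q`. -/
theorem midpoint_is_unique_axis_center
    (a b p p' q : EuclideanSpace ℝ (Fin 2))
    (ha : a 1 = 0) (hb : b 1 = 0)
    (hp'0 : p' 0 = p 0) (hp'1 : p' 1 = -(p 1))
    (hq : q ∈ segment ℝ ((2 : ℝ) • a - p) ((2 : ℝ) • b - p)) (hqp' : q ≠ p') :
    midpoint ℝ p q ∈ segment ℝ a b ∧
    dist (midpoint ℝ p q) p = dist (midpoint ℝ p q) q ∧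
    ∀ c : EuclideanSpace ℝ (Fin 2),
      c 1 = 0 → dist c p = dist c q → c = midpoint ℝ p q := by
  obtain ⟨t, s, ht, hs, hts, hqe⟩ := hq
  have hs' : s = 1 - t := by linarith
  subst hs'
  have hq1 : q 1 = -(p 1) := by
    rw [← hqe]
    simp [PiLp.add_apply, PiLp.smul_apply, PiLp.sub_apply, ha, hb]
    ring
  have hq0 : q 0 ≠ p 0 := by
    intro h
    apply hqp'
    ext i
    fin_cases i
    · simpa [hp'0] using h
    · simpa [hp'1] using hq1
  have hmid : ∀ i, midpoint ℝ p q i = (p i + q i) / 2 := by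
    intro i
    rw [midpoint_eq_smul_add]
    simp [PiLp.add_apply, PiLp.smul_apply]
    ring
  refine ⟨⟨t, 1 - t, ht, by linarith, by ring, ?_⟩, ?_, ?_⟩
  · ext i
    rw [hmid, ← hqe]
    simp [PiLp.add_apply, PiLp.smul_apply, PiLp.sub_apply]
    ring
  · rw [dist_midpoint_left, dist_midpoint_right]
  · intro c hc1 hcd
    have hdd : (c 0 - p 0) ^ 2 + (c 1 - p 1) ^ 2 = (c 0 - q 0) ^ 2 + (c 1 - q 1) ^ 2 := by
      have h := hcd
      rw [EuclideanSpace.dist_eq, EuclideanSpace.dist_eq] at h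
      have h2 := congrArg (· ^ 2) h
      simp only [Fin.sum_univ_two, Real.dist_eq] at h2
      rw [Real.sq_sqrt (by positivity), Real.sq_sqrt (by positivity)] at h2
      simpa [sq_abs] using h2
    have hc0 : c 0 = (p 0 + q 0) / 2 := by
      have h1 : (c 1 - p 1) ^ 2 = (c 1 - q 1) ^ 2 := by rw [hc1, hq1]; ring
      have : (c 0 - p 0) ^ 2 = (c 0 - q 0) ^ 2 := by linarith
      have hne : q 0 - p 0 ≠ 0 := fun h => hq0 (by linarith)
      have h2 : (q 0 - p 0) * (2 * c 0 - (p 0 + q 0)) = 0 := by linear_combination this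
      rcases mul_eq_zero.mp h2 with h | h
      · exact absurd h hne
      · linarith
    ext i
    fin_cases i
    · rw [hmid]; simpa using hc0
    · rw [hmid]; simp [hc1, hq1]
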